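/- Let N ≥ 2 and let T be a simple graph on the vertex set {1,…,N} that is a tree (connected and acyclic). Let M₀, M₁, …, M_m be N×N complex Hermitian matrices such that for every pair s ≠ t that is not an edge of T, the (s,t) entry of M_j is zero for all j = 0,1,…,m, and let z₁,…,z_m ∈ ℝ. Define S₁ := { X ∈ ℂ^{N×N} : X Hermitian positive semidefinite, Tr(M_j X) = z_j for all j = 1,…,m } and S₂ := { X ∈ ℂ^{N×N} : X Hermitian, Tr(M_j X) = z_j for all j = 1,…,m, and for every edge {s,t} of T the 2×2 matrix [[X_{ss}, X_{st}],[X_{ts}, X_{tt}]] is positive semidefinite }. Then the sets of attainable objective values { Tr(M₀ X) : X ∈ S₁ } and { Tr(M₀ X) : X ∈ S₂ } are equal; in particular, the infimum of Tr(M₀ X) over S₁ equals the infimum of Tr(M₀ X) over S₂. -/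

import Mathlib

open Matrix ComplexOrder

private lemma leaf_aux {V : Type*} {G : SimpleGraph V} {c : V} :
    ∀ {b a : V} (q : G.Walk b a), q.IsPath → s(c, b) ∈ q.edges → c = q.getVert 1 := by
  intro b a q hp he
  cases q with
  | nil => simp at he
  | @cons _ w _ h r =>
    rw [SimpleGraph.Walk.edges_cons, List.mem_cons] at he
    rcases he with he | he
    · rcases Sym2.eq_iff.mp he with ⟨rfl, rfl⟩ | ⟨h1, h2⟩
      · exact absurd h (G.loopless.irrefl _)
      · subst h1
        show c = r.getVert 0
        rw [SimpleGraph.Walk.getVert_zero]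
    · exact absurd (r.snd_mem_support_of_mem_edges he)
        ((SimpleGraph.Walk.cons_isPath_iff _ _).mp hp).2

private lemma exists_leaf {V : Type*} [Fintype V] [Nonempty V] (G : SimpleGraph V)
    (hG : G.IsAcyclic) : ∃ b : V, ∀ c d : V, G.Adj b c → G.Adj b d → c = d := by
  classical
  let P : ℕ → Prop := fun n => ∃ (a b : V) (p : G.Walk b a), p.IsPath ∧ p.length = n
  have hP0 : P 0 := ⟨Classical.arbitrary V, Classical.arbitrary V, SimpleGraph.Walk.nil,
    SimpleGraph.Walk.IsPath.nil, rfl⟩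
  obtain ⟨a, b, q, hq, hlen⟩ :=
    Nat.findGreatest_spec (P := P) (m := 0) (n := Fintype.card V) (Nat.zero_le _) hP0
  refine ⟨b, fun c d hc hd => ?_⟩
  have key : ∀ c, G.Adj b c → c = q.getVert 1 := by
    intro c hc
    by_cases hmem : c ∈ q.support
    · have hpath : (q.takeUntil c hmem).IsPath := hq.takeUntil hmem
      have hcyc := hG (SimpleGraph.Walk.cons hc.symm (q.takeUntil c hmem))
      rw [SimpleGraph.Walk.cons_isCycle_iff] at hcyc
      push_neg at hcyc
      have hedge : s(c, b) ∈ q.edges :=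
        q.edges_takeUntil_subset hmem (hcyc hpath)
      exact leaf_aux q hq hedge
    · exfalso
      have hp' : (SimpleGraph.Walk.cons hc.symm q).IsPath := hq.cons hmem
      have hlt : (SimpleGraph.Walk.cons hc.symm q).length < Fintype.card V := hp'.length_lt
      rw [SimpleGraph.Walk.length_cons] at hlt
      have hgr := Nat.findGreatest_is_greatest
        (k := q.length + 1) (n := Fintype.card V) (P := P) (by omega) (by omega)
      exact hgr ⟨a, c, SimpleGraph.Walk.cons hc.symm q, hp', by
        rw [SimpleGraph.Walk.length_cons]⟩
  rw [key c hc, key d hd]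

open Matrix ComplexOrder

private lemma dot_self_real {ι : Type*} [Fintype ι] (w : ι → ℂ) :
    star w ⬝ᵥ w = ((∑ i, Complex.normSq (w i) : ℝ) : ℂ) := by
  push_cast
  simp only [dotProduct, Pi.star_apply]
  exact Finset.sum_congr rfl fun i _ => by
    rw [Complex.star_def, mul_comm, Complex.mul_conj]

private lemma dot_swap {ι : Type*} [Fintype ι] (x y : ι → ℂ) :
    star x ⬝ᵥ y = star (star y ⬝ᵥ x) := by
  simp only [dotProduct, star_sum, Pi.star_apply, StarMul.star_mul, star_star]

private lemma posSemidef_submatrix' {n₁ n₂ : Type*} [Fintype n₁] [Fintype n₂] [DecidableEq n₂]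
    {M : Matrix n₂ n₂ ℂ} (hM : M.PosSemidef) (f : n₁ → n₂) :
    (M.submatrix f f).PosSemidef := by
  obtain ⟨B, rfl⟩ : ∃ B : Matrix n₂ n₂ ℂ, M = Bᴴ * B := by
    open MatrixOrder in exact CStarAlgebra.nonneg_iff_eq_star_mul_self.mp hM.nonneg
  have h : (Bᴴ * B).submatrix f f = (B.submatrix id f)ᴴ * (B.submatrix id f) := by
    ext i j
    simp [Matrix.mul_apply, Matrix.submatrix_apply, Matrix.conjTranspose_apply]
  rw [h]
  exact posSemidef_conjTranspose_mul_self _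

private lemma tree_completion : ∀ (n : ℕ) (V : Type) [Fintype V] [DecidableEq V]
    (G : SimpleGraph V) (X : Matrix V V ℂ), Fintype.card V ≤ n → G.IsAcyclic →
    (∀ s t, X t s = star (X s t)) →
    (∀ s, 0 ≤ (X s s).re) →
    (∀ s t, G.Adj s t → Complex.normSq (X s t) ≤ (X s s).re * (X t t).re) →
    ∃ Y : Matrix V V ℂ, Y.PosSemidef ∧ (∀ s, Y s s = X s s) ∧
      (∀ s t, G.Adj s t → Y s t = X s t) := by
  intro n
  induction n with
  | zero =>
    intro V _ _ G X hcard _ _ _ _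
    have hE : IsEmpty V := Fintype.card_eq_zero_iff.mp (Nat.le_zero.mp hcard)
    exact ⟨0, Matrix.PosSemidef.zero, fun s => hE.elim s, fun s t _ => hE.elim s⟩
  | succ n ih =>
    intro V _ _ G X hcard hG hherm hdiag hbound
    rcases isEmpty_or_nonempty V with hV | hV
    · exact ⟨0, Matrix.PosSemidef.zero, fun s => hV.elim s, fun s t _ => hV.elim s⟩
    classical
    have hreal : ∀ u : V, X u u = ((X u u).re : ℂ) := by
      intro u
      have h1 := congrArg Complex.im (hherm u u)
      simp only [Complex.star_def, Complex.conj_im] at h1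
      exact Complex.ext rfl (by simp; linarith)
    obtain ⟨b, hb⟩ := exists_leaf G hG
    have hcard' : Fintype.card {u : V // u ≠ b} ≤ n := by
      have h1 : Fintype.card {u : V // u ≠ b} < Fintype.card V :=
        Fintype.card_subtype_lt (x := b) (by simp)
      omega
    set G' : SimpleGraph {u : V // u ≠ b} := G.comap (Subtype.val) with hG'def
    have hG' : G'.IsAcyclic := by
      intro v c hc
      have hemb : G.comap (Function.Embedding.subtype (fun u : V => u ≠ b)) ↪g G :=
        SimpleGraph.Embedding.comap (Function.Embedding.subtype _) G
      exact hG _ (SimpleGraph.Walk.IsCycle.map (f := hemb.toHom) hemb.injective hc)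
    obtain ⟨Y', hY'psd, hY'diag, hY'edge⟩ :=
      ih {u : V // u ≠ b} G' (X.submatrix (Subtype.val) (Subtype.val)) hcard' hG'
        (fun s t => hherm _ _) (fun s => hdiag _) (fun s t h => hbound _ _ h)
    obtain ⟨B, hB⟩ : ∃ B : Matrix {u : V // u ≠ b} {u : V // u ≠ b} ℂ, Y' = Bᴴ * B := by
      open MatrixOrder in exact CStarAlgebra.nonneg_iff_eq_star_mul_self.mp hY'psd.nonneg
    set col : {u : V // u ≠ b} → {u : V // u ≠ b} → ℂ := fun u i => B i u with hcol
    have colfact : ∀ u v : {u : V // u ≠ b}, star (col u) ⬝ᵥ col v = Y' u v := by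
      intro u v
      rw [hB]
      simp [Matrix.mul_apply, dotProduct, Matrix.conjTranspose_apply, hcol]
    -- construct the new column w for vertex b
    obtain ⟨w, hw1, hw2⟩ :
        ∃ w : {u : V // u ≠ b} → ℂ, (∑ i, Complex.normSq (w i)) ≤ (X b b).re ∧
          (∀ t : {u : V // u ≠ b}, G.Adj b ↑t → star w ⬝ᵥ col t = X b ↑t) := by
      by_cases hnb : ∃ u : {u : V // u ≠ b}, G.Adj b ↑u
      · obtain ⟨u₀, hu₀⟩ := hnb
        have hρ0 : 0 ≤ (X ↑u₀ ↑u₀).re := hdiag _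
        have hcolρ : star (col u₀) ⬝ᵥ col u₀ = (((X ↑u₀ ↑u₀).re : ℝ) : ℂ) := by
          rw [colfact, hY'diag, Matrix.submatrix_apply]
          exact hreal _
        by_cases hρz : (X ↑u₀ ↑u₀).re = 0
        · refine ⟨0, by simpa using hdiag b, fun t ht => ?_⟩
          have ht' : (t : V) = ↑u₀ := hb _ _ ht hu₀
          have hXbu : X b ↑u₀ = 0 := by
            have h2 := hbound b ↑u₀ hu₀
            rw [hρz, mul_zero] at h2
            exact Complex.normSq_eq_zero.mp (le_antisymm h2 (Complex.normSq_nonneg _))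
          have hXbt : X b ↑t = 0 := by rw [ht', hXbu]
          simp [hXbt]
        · have hρpos : 0 < (X ↑u₀ ↑u₀).re := lt_of_le_of_ne hρ0 (Ne.symm hρz)
          have hρC : (((X ↑u₀ ↑u₀).re : ℝ) : ℂ) ≠ 0 := by exact_mod_cast hρz
          refine ⟨(starRingEnd ℂ (X b ↑u₀) / (((X ↑u₀ ↑u₀).re : ℝ) : ℂ)) • col u₀, ?_, ?_⟩
          · have hsum : (∑ i, Complex.normSq (col u₀ i)) = (X ↑u₀ ↑u₀).re := by
              have h3 := (dot_self_real (col u₀)).symm.trans hcolρ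
              exact_mod_cast h3
            have hcalc : (∑ i, Complex.normSq
                  (((starRingEnd ℂ (X b ↑u₀) / (((X ↑u₀ ↑u₀).re : ℝ) : ℂ)) • col u₀) i))
                = Complex.normSq (X b ↑u₀) / (X ↑u₀ ↑u₀).re := by
              simp only [Pi.smul_apply, smul_eq_mul, Complex.normSq_mul, ← Finset.mul_sum,
                hsum, Complex.normSq_div, Complex.normSq_conj, Complex.normSq_ofReal]
              field_simp
            rw [hcalc, div_le_iff₀ hρpos]
            exact hbound b ↑u₀ hu₀
          · intro t ht
            have ht'' : t = u₀ := Subtype.ext (hb _ _ ht hu₀)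
            rw [ht'', star_smul, smul_dotProduct, hcolρ]
            simp only [smul_eq_mul, Complex.star_def, map_div₀, Complex.conj_conj,
              Complex.conj_ofReal]
            exact div_mul_cancel₀ _ hρC
      · exact ⟨0, by simpa using hdiag b, fun t ht => absurd ⟨t, ht⟩ hnb⟩
    set ν : ℝ := ∑ i, Complex.normSq (w i) with hν
    set δ : ℝ := (X b b).re - ν with hδ
    have hδ0 : 0 ≤ δ := by simp only [hδ]; linarith
    set g : V → {u : V // u ≠ b} → ℂ := fun u => if h : u = b then w else col ⟨u, h⟩ with hg
    set G2 : Matrix {u : V // u ≠ b} V ℂ := Matrix.of (fun i u => g u i) with hG2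
    set D : Matrix V V ℂ := Matrix.diagonal (fun u => if u = b then (δ : ℂ) else 0) with hD
    have hgb : g b = w := by simp [hg]
    have hgo : ∀ (u : V) (h : u ≠ b), g u = col ⟨u, h⟩ := fun u h => by simp [hg, h]
    have hDb : D b b = (δ : ℂ) := by simp [hD]
    have hDo : ∀ s t : V, s ≠ t → D s t = 0 := fun s t h => by
      simp [hD, Matrix.diagonal_apply_ne _ h]
    have hDs : ∀ s : V, s ≠ b → D s s = 0 := fun s h => by simp [hD, h]
    have hDpsd : D.PosSemidef := by
      rw [hD]
      refine posSemidef_diagonal_iff.mpr fun u => ?_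
      split
      · exact_mod_cast Complex.zero_le_real.mpr hδ0
      · exact le_refl 0
    have hentry : ∀ s t : V, (G2ᴴ * G2) s t = star (g s) ⬝ᵥ g t := by
      intro s t
      simp [Matrix.mul_apply, dotProduct, Matrix.conjTranspose_apply, hG2]
    refine ⟨G2ᴴ * G2 + D, (posSemidef_conjTranspose_mul_self G2).add hDpsd, ?_, ?_⟩
    · intro s
      by_cases hs : s = b
      · rw [hs, Matrix.add_apply, hentry, hDb, hgb, dot_self_real, ← hν, hreal b,
          ← Complex.ofReal_add]
        congr 1
        rw [hδ]
        ring
      · rw [Matrix.add_apply, hentry, hDs s hs, hgo s hs, colfact, hY'diag,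
          Matrix.submatrix_apply, add_zero]
    · intro s t hst
      have hne : s ≠ t := hst.ne
      rw [Matrix.add_apply, hentry, hDo s t hne, add_zero]
      by_cases hs : s = b
      · have htb : t ≠ b := fun h => hne (hs.trans h.symm)
        rw [hs, hgb, hgo t htb]
        have hadj : G.Adj b ↑(⟨t, htb⟩ : {u : V // u ≠ b}) := hs ▸ hst
        rw [hw2 ⟨t, htb⟩ hadj]
      · by_cases ht : t = b
        · rw [ht, hgo s hs, hgb, dot_swap]
          have hadj : G.Adj b s := by rw [← ht]; exact hst.symm
          rw [hw2 ⟨s, hs⟩ hadj]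
          exact (hherm b s).symm
        · rw [hgo s hs, hgo t ht, colfact]
          have hadj : G'.Adj ⟨s, hs⟩ ⟨t, ht⟩ := hst
          rw [hY'edge _ _ hadj, Matrix.submatrix_apply]

private lemma psd2_facts {a b c d : ℂ} (hc : c = star b) (ha : a.im = 0) (hd : d.im = 0)
    (h : (Matrix.of ![![a, b], ![c, d]]).PosSemidef) :
    0 ≤ a.re ∧ 0 ≤ d.re ∧ Complex.normSq b ≤ a.re * d.re := by
  have hq : ∀ p q : ℂ, 0 ≤ (star p * (a * p + b * q) + star q * (c * p + d * q)).re := by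
    intro p q
    have h2 := h.dotProduct_mulVec_nonneg ![p, q]
    rw [Complex.le_def] at h2
    have h3 := h2.1
    simp only [Complex.zero_re] at h3
    convert h3 using 2
    simp [dotProduct, Matrix.mulVec, Fin.sum_univ_two]
  have ha0 : 0 ≤ a.re := by have := hq 1 0; simpa using this
  have hd0 : 0 ≤ d.re := by have := hq 0 1; simpa using this
  refine ⟨ha0, hd0, ?_⟩
  have key : ∀ k : ℝ, 0 ≤ a.re - 2 * k * Complex.normSq b + k ^ 2 * Complex.normSq b * d.re := by
    intro k
    have h4 := hq 1 (-(k : ℂ) * star b)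
    rw [hc] at h4
    simp only [star_one, one_mul, mul_one, StarMul.star_mul, star_neg, star_star, Complex.star_def,
      Complex.add_re, Complex.mul_re, Complex.mul_im, Complex.add_im, Complex.neg_re,
      Complex.neg_im, Complex.conj_re, Complex.conj_im, Complex.one_re, Complex.one_im,
      Complex.ofReal_re, Complex.ofReal_im, Complex.normSq_apply, ha, hd] at h4 ⊢
    nlinarith [h4]
  by_cases hdz : d.re = 0
  · rw [hdz, mul_zero]
    by_contra hlt
    push_neg at hlt
    have h5 := key ((a.re + 1) / (2 * Complex.normSq b))
    rw [hdz] at h5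
    have hpos : (0:ℝ) < 2 * Complex.normSq b := by positivity
    rw [div_pow] at h5
    field_simp at h5
    nlinarith [h5, hlt]
  · have hdp : 0 < d.re := lt_of_le_of_ne hd0 (Ne.symm hdz)
    have h6 := key (1 / d.re)
    have h7 : (1 / d.re) ^ 2 * Complex.normSq b * d.re = Complex.normSq b / d.re := by
      field_simp
    rw [h7] at h6
    have h8 : 2 * (1 / d.re) * Complex.normSq b = 2 * (Complex.normSq b / d.re) := by
      field_simp
    rw [h8] at h6
    have h9 : Complex.normSq b / d.re ≤ a.re := by linarith
    rw [div_le_iff₀ hdp] at h9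
    linarith [h9]

theorem stmt_16 (N m : ℕ) (hN : 2 ≤ N)
    (T : SimpleGraph (Fin N)) (hT : T.IsTree)
    (M₀ : Matrix (Fin N) (Fin N) ℂ) (M : Fin m → Matrix (Fin N) (Fin N) ℂ)
    (hM₀ : M₀.IsHermitian) (hM : ∀ j, (M j).IsHermitian)
    (hsupp₀ : ∀ s t : Fin N, s ≠ t → ¬ T.Adj s t → M₀ s t = 0)
    (hsupp : ∀ j, ∀ s t : Fin N, s ≠ t → ¬ T.Adj s t → M j s t = 0)
    (z : Fin m → ℝ) :
    {r : ℝ | ∃ X : Matrix (Fin N) (Fin N) ℂ, X.PosSemidef ∧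
        (∀ j, (M j * X).trace = (z j : ℂ)) ∧ (M₀ * X).trace.re = r} =
      {r : ℝ | ∃ X : Matrix (Fin N) (Fin N) ℂ, X.IsHermitian ∧
        (∀ j, (M j * X).trace = (z j : ℂ)) ∧
        (∀ s t : Fin N, T.Adj s t →
          (Matrix.of ![![X s s, X s t], ![X t s, X t t]]).PosSemidef) ∧
        (M₀ * X).trace.re = r} ∧
    sInf {r : ℝ | ∃ X : Matrix (Fin N) (Fin N) ℂ, X.PosSemidef ∧
        (∀ j, (M j * X).trace = (z j : ℂ)) ∧ (M₀ * X).trace.re = r} =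
      sInf {r : ℝ | ∃ X : Matrix (Fin N) (Fin N) ℂ, X.IsHermitian ∧
        (∀ j, (M j * X).trace = (z j : ℂ)) ∧
        (∀ s t : Fin N, T.Adj s t →
          (Matrix.of ![![X s s, X s t], ![X t s, X t t]]).PosSemidef) ∧
        (M₀ * X).trace.re = r} := by
  have h2x2 : ∀ (X : Matrix (Fin N) (Fin N) ℂ) (s t : Fin N),
      (Matrix.of ![![X s s, X s t], ![X t s, X t t]]) = X.submatrix ![s, t] ![s, t] := by
    intro X s t
    ext i j
    fin_cases i <;> fin_cases j <;> rfl
  have trace_congr : ∀ (A X Y : Matrix (Fin N) (Fin N) ℂ),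
      (∀ s t, s ≠ t → ¬T.Adj s t → A s t = 0) →
      (∀ s, Y s s = X s s) → (∀ s t, T.Adj s t → Y s t = X s t) →
      (A * Y).trace = (A * X).trace := by
    intro A X Y hA hdg he
    simp only [Matrix.trace, Matrix.diag, Matrix.mul_apply]
    refine Finset.sum_congr rfl fun s _ => Finset.sum_congr rfl fun t _ => ?_
    by_cases h1 : t = s
    · rw [h1, hdg]
    · by_cases hadj : T.Adj s t
      · rw [he t s hadj.symm]
      · rw [hA s t (Ne.symm h1) hadj, zero_mul, zero_mul]
  have hset : {r : ℝ | ∃ X : Matrix (Fin N) (Fin N) ℂ, X.PosSemidef ∧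
        (∀ j, (M j * X).trace = (z j : ℂ)) ∧ (M₀ * X).trace.re = r} =
      {r : ℝ | ∃ X : Matrix (Fin N) (Fin N) ℂ, X.IsHermitian ∧
        (∀ j, (M j * X).trace = (z j : ℂ)) ∧
        (∀ s t : Fin N, T.Adj s t →
          (Matrix.of ![![X s s, X s t], ![X t s, X t t]]).PosSemidef) ∧
        (M₀ * X).trace.re = r} := by
    ext r
    simp only [Set.mem_setOf_eq]
    constructor
    · rintro ⟨X, hX, hz, hr⟩
      refine ⟨X, hX.1, hz, fun s t _ => ?_, hr⟩
      rw [h2x2]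
      exact posSemidef_submatrix' hX _
    · rintro ⟨X, hXh, hz, h2, hr⟩
      have hherm : ∀ s t, X t s = star (X s t) := fun s t => (hXh.apply t s).symm
      have him : ∀ s, (X s s).im = 0 := by
        intro s
        have h1 := congrArg Complex.im (hherm s s)
        simp only [Complex.star_def, Complex.conj_im] at h1
        linarith
      have hnbr : ∀ s : Fin N, ∃ t, T.Adj s t := by
        intro s
        obtain ⟨t, ht⟩ := Fintype.exists_ne_of_one_lt_card (by simp; omega) s
        obtain ⟨p⟩ := hT.isConnected.preconnected s t
        obtain ⟨u, hadj, p', rfl⟩ := SimpleGraph.Walk.exists_eq_cons_of_ne (Ne.symm ht) p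
        exact ⟨u, hadj⟩
      have facts : ∀ s t, T.Adj s t → 0 ≤ (X s s).re ∧ 0 ≤ (X t t).re ∧
          Complex.normSq (X s t) ≤ (X s s).re * (X t t).re := by
        intro s t hadj
        exact psd2_facts (hherm s t) (him s) (him t) (h2 s t hadj)
      have hdiag : ∀ s, 0 ≤ (X s s).re := fun s => by
        obtain ⟨t, ht⟩ := hnbr s
        exact (facts s t ht).1
      obtain ⟨Y, hYpsd, hYd, hYe⟩ := tree_completion N (Fin N) T X (by simp) hT.2
        hherm hdiag (fun s t hadj => (facts s t hadj).2.2)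
      refine ⟨Y, hYpsd, fun j => (trace_congr (M j) X Y (hsupp j) hYd hYe).trans (hz j), ?_⟩
      rw [trace_congr M₀ X Y hsupp₀ hYd hYe]
      exact hr
  exact ⟨hset, by rw [hset]⟩
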